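/- Equivalence of three-bidder optimal auction design and the segment-packing problem: the maximum, over all monotone allocations A : [S]³ → {0,1,2,3}, of the threshold profit of A equals the maximum, over all finite collections of pairwise disjoint segments induced by φ, of the total weight of the collection. -/
import Mathlib


/-- The valuation grid `[S]³`. -/
def grid3 (S : ℕ) : Finset (ℕ × ℕ × ℕ) :=
  Finset.Icc 1 S ×ˢ Finset.Icc 1 S ×ˢ Finset.Icc 1 S

/-- The set of points of a segment: a segment is a direction `d : Fin 3`
together with its apex `(x,y,z)`; e.g. an `x`-segment with apex `(x,y,z)`
consists of the points `(x',y,z)` with `x ≤ x' ≤ S`. -/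
def segPts (S : ℕ) (s : Fin 3 × (ℕ × ℕ × ℕ)) : Finset (ℕ × ℕ × ℕ) :=
  if s.1 = 0 then (Finset.Icc s.2.1 S).image (fun x' => (x', s.2.2.1, s.2.2.2))
  else if s.1 = 1 then (Finset.Icc s.2.2.1 S).image (fun y' => (s.2.1, y', s.2.2.2))
  else (Finset.Icc s.2.2.2 S).image (fun z' => (s.2.1, s.2.2.1, z'))

/-- The weight of a segment. -/
def segWt (S : ℕ) (f g h : ℕ → ℕ → ℕ → ℝ) (s : Fin 3 × (ℕ × ℕ × ℕ)) : ℝ :=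
  if s.1 = 0 then ∑ x' ∈ Finset.Icc s.2.1 S, f x' s.2.2.1 s.2.2.2
  else if s.1 = 1 then ∑ y' ∈ Finset.Icc s.2.2.1 S, g s.2.1 y' s.2.2.2
  else ∑ z' ∈ Finset.Icc s.2.2.2 S, h s.2.1 s.2.2.1 z'

/-- A segment is induced by `φ` (via the marginal profit contribution
functions `f`, `g`, `h`): its apex lies in `[S]³` and has strictly positive
marginal profit contribution in the segment's direction. -/
def ValidSeg (S : ℕ) (f g h : ℕ → ℕ → ℕ → ℝ) (s : Fin 3 × (ℕ × ℕ × ℕ)) : Prop :=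
  s.2 ∈ grid3 S ∧
  (if s.1 = 0 then 0 < f s.2.1 s.2.2.1 s.2.2.2
   else if s.1 = 1 then 0 < g s.2.1 s.2.2.1 s.2.2.2
   else 0 < h s.2.1 s.2.2.1 s.2.2.2)

/-- An allocation `A : [S]³ → {0,1,2,3}` is monotone. -/
def Mono3 (S : ℕ) (A : ℕ → ℕ → ℕ → ℕ) : Prop :=
  (∀ x y z, (x, y, z) ∈ grid3 S → A x y z = 1 →
    ∀ x', x ≤ x' → x' ≤ S → A x' y z = 1) ∧
  (∀ x y z, (x, y, z) ∈ grid3 S → A x y z = 2 →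
    ∀ y', y ≤ y' → y' ≤ S → A x y' z = 2) ∧
  (∀ x y z, (x, y, z) ∈ grid3 S → A x y z = 3 →
    ∀ z', z ≤ z' → z' ≤ S → A x y z' = 3)

/-- The threshold profit of an allocation `A` for the distribution `φ`. -/
noncomputable def profit3 (S : ℕ) (φ : ℕ → ℕ → ℕ → ℝ) (A : ℕ → ℕ → ℕ → ℕ) : ℝ :=
  (∑ p ∈ (grid3 S).filter (fun p => A p.1 p.2.1 p.2.2 = 1),
    φ p.1 p.2.1 p.2.2 * (sInf {x' | 1 ≤ x' ∧ A x' p.2.1 p.2.2 = 1} : ℕ)) +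
  (∑ p ∈ (grid3 S).filter (fun p => A p.1 p.2.1 p.2.2 = 2),
    φ p.1 p.2.1 p.2.2 * (sInf {y' | 1 ≤ y' ∧ A p.1 y' p.2.2 = 2} : ℕ)) +
  (∑ p ∈ (grid3 S).filter (fun p => A p.1 p.2.1 p.2.2 = 3),
    φ p.1 p.2.1 p.2.2 * (sInf {z' | 1 ≤ z' ∧ A p.1 p.2.1 z' = 3} : ℕ))



open Finset
open scoped Classical

section OneDim

variable {S : ℕ} {w u : ℕ → ℝ}

lemma sum_Icc_split (v : ℕ → ℝ) {x : ℕ} (hx : x ≤ S) :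
    ∑ x' ∈ Finset.Icc x S, v x' = v x + ∑ x' ∈ Finset.Icc (x+1) S, v x' := by
  rw [Finset.Icc_add_one_left_eq_Ioc, ← Finset.Ioc_insert_left hx,
    Finset.sum_insert Finset.left_notMem_Ioc]

lemma u_nonneg (hu : ∀ x, u x = max ((x:ℝ) * ∑ x' ∈ Finset.Icc x S, w x'
    - ∑ x' ∈ Finset.Icc (x+1) S, u x') 0) (x : ℕ) : 0 ≤ u x := by
  rw [hu x]; exact le_max_right _ _

lemma U_max (hu : ∀ x, u x = max ((x:ℝ) * ∑ x' ∈ Finset.Icc x S, w x'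
    - ∑ x' ∈ Finset.Icc (x+1) S, u x') 0) {x : ℕ} (hx : x ≤ S) :
    ∑ x' ∈ Finset.Icc x S, u x'
      = max ((x:ℝ) * ∑ x' ∈ Finset.Icc x S, w x') (∑ x' ∈ Finset.Icc (x+1) S, u x') := by
  have key : ∀ a b : ℝ, max (a - b) 0 + b = max a b := by
    intro a b
    rcases le_total a b with h|h
    · rw [max_eq_right (by linarith), max_eq_right h]; ring
    · rw [max_eq_left (by linarith), max_eq_left h]; ring
  rw [sum_Icc_split u hx, hu x, key]

lemma aT_le_U (hu : ∀ x, u x = max ((x:ℝ) * ∑ x' ∈ Finset.Icc x S, w x'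
    - ∑ x' ∈ Finset.Icc (x+1) S, u x') 0) {x : ℕ} (hx : x ≤ S) :
    (x:ℝ) * ∑ x' ∈ Finset.Icc x S, w x' ≤ ∑ x' ∈ Finset.Icc x S, u x' := by
  rw [U_max hu hx]; exact le_max_left _ _

lemma U_eq_of_pos (hu : ∀ x, u x = max ((x:ℝ) * ∑ x' ∈ Finset.Icc x S, w x'
    - ∑ x' ∈ Finset.Icc (x+1) S, u x') 0) {x : ℕ} (hx : x ≤ S) (hpos : 0 < u x) :
    ∑ x' ∈ Finset.Icc x S, u x' = (x:ℝ) * ∑ x' ∈ Finset.Icc x S, w x' := by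
  have h1 := hu x
  by_cases hc : (x:ℝ) * ∑ x' ∈ Finset.Icc x S, w x' - ∑ x' ∈ Finset.Icc (x+1) S, u x' ≤ 0
  · rw [max_eq_right hc] at h1; exact absurd h1 (by linarith)
  · push_neg at hc
    rw [max_eq_left hc.le] at h1
    rw [sum_Icc_split u hx, h1]; ring

end OneDim

section Line

variable {S : ℕ} {w u : ℕ → ℝ}

lemma line_eq
    (hu : ∀ x, u x = max ((x:ℝ) * ∑ x' ∈ Finset.Icc x S, w x'
      - ∑ x' ∈ Finset.Icc (x+1) S, u x') 0)
    (P B : ℕ → Prop) [DecidablePred P] [DecidablePred B]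
    (hP : ∀ a, P a → 1 ≤ a ∧ a ≤ S ∧ 0 < u a)
    (huniq : ∀ a b, P a → P b → a = b)
    (hB : ∀ x, B x ↔ ∃ a, P a ∧ a ≤ x ∧ x ≤ S) :
    ∑ x ∈ Finset.Icc 1 S, (if B x then w x * ((sInf {x' | 1 ≤ x' ∧ B x'} : ℕ) : ℝ) else 0)
    = ∑ x ∈ Finset.Icc 1 S, (if P x then ∑ x' ∈ Finset.Icc x S, u x' else 0) := by
  by_cases hex : ∃ a, P a
  · obtain ⟨a, ha⟩ := hex
    obtain ⟨ha1, haS, hau⟩ := hP a ha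
    have hBx : ∀ x, B x ↔ (a ≤ x ∧ x ≤ S) := by
      intro x
      rw [hB]
      constructor
      · rintro ⟨b, hb, h1, h2⟩
        exact ⟨(huniq a b ha hb) ▸ h1, h2⟩
      · exact fun hx => ⟨a, ha, hx⟩
    have hinf : sInf {x' | 1 ≤ x' ∧ B x'} = a := by
      apply IsLeast.csInf_eq
      refine ⟨⟨ha1, (hBx a).2 ⟨le_refl a, haS⟩⟩, fun b hb => ((hBx b).1 hb.2).1⟩
    have hRHS : ∑ x ∈ Finset.Icc 1 S, (if P x then ∑ x' ∈ Finset.Icc x S, u x' else 0)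
        = ∑ x' ∈ Finset.Icc a S, u x' := by
      rw [Finset.sum_congr rfl (g := fun x => if x = a then ∑ x' ∈ Finset.Icc x S, u x' else 0)
        (fun x _ => by
          congr 1
          simp only [eq_iff_iff]
          exact ⟨fun hx => huniq x a hx ha, fun hx => hx ▸ ha⟩),
        Finset.sum_ite_eq' (Finset.Icc 1 S) a, if_pos (by simp [ha1, haS])]
    rw [hRHS, hinf]
    have hsub : Finset.Icc a S ⊆ Finset.Icc 1 S := Finset.Icc_subset_Icc_left ha1
    rw [← Finset.sum_subset hsub (fun x hx hnx => by
      rw [if_neg]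
      intro hBxx
      exact hnx (Finset.mem_Icc.2 ((hBx x).1 hBxx)))]
    rw [Finset.sum_congr rfl (g := fun x => w x * (a:ℝ)) (fun x hx => by
      rw [if_pos ((hBx x).2 (Finset.mem_Icc.1 hx))])]
    rw [← Finset.sum_mul, U_eq_of_pos hu haS hau, mul_comm]
  · have h1 : ∀ x, ¬ B x := fun x hBx => by
      obtain ⟨a, ha, _⟩ := (hB x).1 hBx
      exact hex ⟨a, ha⟩
    have h2 : ∀ x, ¬ P x := fun x hPx => hex ⟨x, hPx⟩
    rw [Finset.sum_eq_zero (fun x _ => if_neg (h1 x)),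
      Finset.sum_eq_zero (fun x _ => if_neg (h2 x))]

end Line

section Line2

variable {S : ℕ} {w u : ℕ → ℝ}

lemma line_le
    (hw : ∀ x, 0 ≤ w x)
    (hu : ∀ x, u x = max ((x:ℝ) * ∑ x' ∈ Finset.Icc x S, w x'
      - ∑ x' ∈ Finset.Icc (x+1) S, u x') 0)
    (B : ℕ → Prop) [DecidablePred B]
    (hmono : ∀ x, 1 ≤ x → x ≤ S → B x → ∀ x', x ≤ x' → x' ≤ S → B x') :
    ∑ x ∈ Finset.Icc 1 S, (if B x then w x * ((sInf {x' | 1 ≤ x' ∧ B x'} : ℕ) : ℝ) else 0)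
    ≤ ∑ x ∈ Finset.Icc 1 S,
        (if B x ∧ 0 < u x ∧ ∀ t, 1 ≤ t → t < x → ¬(B t ∧ 0 < u t)
         then ∑ x' ∈ Finset.Icc x S, u x' else 0) := by
  classical
  by_cases hex : ∃ x, 1 ≤ x ∧ x ≤ S ∧ B x
  · set τ := Nat.find hex with hτdef
    obtain ⟨hτ1, hτS, hτB⟩ := Nat.find_spec hex
    have hτmin : ∀ t, t < τ → ¬(1 ≤ t ∧ t ≤ S ∧ B t) := fun t ht => Nat.find_min hex ht
    have hBup : ∀ x, τ ≤ x → x ≤ S → B x := fun x h1 h2 => hmono τ hτ1 hτS hτB x h1 h2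
    have hBlow : ∀ x, 1 ≤ x → x < τ → ¬ B x := by
      intro x h1 hx hBx
      exact hτmin x hx ⟨h1, by omega, hBx⟩
    have hinf : sInf {x' | 1 ≤ x' ∧ B x'} = τ := by
      apply IsLeast.csInf_eq
      refine ⟨⟨hτ1, hτB⟩, fun b hb => ?_⟩
      by_contra hbτ
      push_neg at hbτ
      exact hBlow b hb.1 hbτ hb.2
    have hLHS : ∑ x ∈ Finset.Icc 1 S,
        (if B x then w x * ((sInf {x' | 1 ≤ x' ∧ B x'} : ℕ) : ℝ) else 0)
        = (τ:ℝ) * ∑ x' ∈ Finset.Icc τ S, w x' := by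
      rw [hinf]
      have hsub : Finset.Icc τ S ⊆ Finset.Icc 1 S := Finset.Icc_subset_Icc_left hτ1
      rw [← Finset.sum_subset hsub (fun x hx hnx => by
        rw [Finset.mem_Icc] at hx
        rw [Finset.mem_Icc] at hnx
        rw [if_neg]
        intro hBxx
        exact hBlow x hx.1 (by omega) hBxx)]
      rw [Finset.sum_congr rfl (g := fun x => w x * (τ:ℝ)) (fun x hx => by
        rw [Finset.mem_Icc] at hx
        rw [if_pos (hBup x hx.1 hx.2)]), ← Finset.sum_mul, mul_comm]
    rw [hLHS]
    by_cases hpos : ∃ x, τ ≤ x ∧ x ≤ S ∧ 0 < u x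
    · set a := Nat.find hpos with hadef
      obtain ⟨haτ, haS, hau⟩ := Nat.find_spec hpos
      have hamin : ∀ t, t < a → ¬(τ ≤ t ∧ t ≤ S ∧ 0 < u t) := fun t ht => Nat.find_min hpos ht
      have hcond : ∀ x ∈ Finset.Icc 1 S,
          ((B x ∧ 0 < u x ∧ ∀ t, 1 ≤ t → t < x → ¬(B t ∧ 0 < u t)) ↔ x = a) := by
        intro x hx
        rw [Finset.mem_Icc] at hx
        constructor
        · rintro ⟨hBx, hux, hmin⟩
          have hτx : τ ≤ x := by
            by_contra hc
            exact hBlow x hx.1 (by omega) hBx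
          rcases lt_trichotomy x a with hlt | heq | hgt
          · exact absurd ⟨hτx, hx.2, hux⟩ (hamin x hlt)
          · exact heq
          · exact absurd ⟨hBup a haτ haS, hau⟩ (hmin a (by omega) hgt)
        · rintro rfl
          refine ⟨hBup a haτ haS, hau, fun t ht1 hta hc => ?_⟩
          have hτt : τ ≤ t := by
            by_contra hcc
            exact hBlow t ht1 (by omega) hc.1
          exact hamin t hta ⟨hτt, by omega, hc.2⟩
      have hRHS : ∑ x ∈ Finset.Icc 1 S,
          (if B x ∧ 0 < u x ∧ ∀ t, 1 ≤ t → t < x → ¬(B t ∧ 0 < u t)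
           then ∑ x' ∈ Finset.Icc x S, u x' else 0)
          = ∑ x' ∈ Finset.Icc a S, u x' := by
        rw [Finset.sum_congr rfl (g := fun x => if x = a then ∑ x' ∈ Finset.Icc x S, u x' else 0)
          (fun x hx => by
            congr 1
            simp only [eq_iff_iff]
            exact hcond x hx),
          Finset.sum_ite_eq' (Finset.Icc 1 S) a, if_pos (by
            rw [Finset.mem_Icc]; omega)]
      rw [hRHS]
      have hUeq : ∑ x' ∈ Finset.Icc τ S, u x' = ∑ x' ∈ Finset.Icc a S, u x' := by
        rw [← Finset.Ico_add_one_right_eq_Icc τ S, ← Finset.Ico_add_one_right_eq_Icc a S,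
          ← Finset.sum_Ico_consecutive u haτ (by omega : a ≤ S + 1)]
        have : ∑ x' ∈ Finset.Ico τ a, u x' = 0 := by
          apply Finset.sum_eq_zero
          intro t ht
          rw [Finset.mem_Ico] at ht
          have h1 : ¬ (0 < u t) := fun hc => hamin t ht.2 ⟨ht.1, by omega, hc⟩
          have h2 := u_nonneg hu t
          linarith
        rw [this, zero_add]
      calc (τ:ℝ) * ∑ x' ∈ Finset.Icc τ S, w x' ≤ ∑ x' ∈ Finset.Icc τ S, u x' := aT_le_U hu hτS
        _ = ∑ x' ∈ Finset.Icc a S, u x' := hUeq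
    · have hRHS : ∑ x ∈ Finset.Icc 1 S,
          (if B x ∧ 0 < u x ∧ ∀ t, 1 ≤ t → t < x → ¬(B t ∧ 0 < u t)
           then ∑ x' ∈ Finset.Icc x S, u x' else 0) = 0 := by
        apply Finset.sum_eq_zero
        intro x hx
        rw [Finset.mem_Icc] at hx
        rw [if_neg]
        rintro ⟨hBx, hux, -⟩
        have hτx : τ ≤ x := by
          by_contra hc
          exact hBlow x hx.1 (by omega) hBx
        exact hpos ⟨x, hτx, hx.2, hux⟩
      rw [hRHS]
      have hU0 : ∑ x' ∈ Finset.Icc τ S, u x' = 0 := by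
        apply Finset.sum_eq_zero
        intro t ht
        rw [Finset.mem_Icc] at ht
        have h1 : ¬ (0 < u t) := fun hc => hpos ⟨t, ht.1, ht.2, hc⟩
        have h2 := u_nonneg hu t
        linarith
      calc (τ:ℝ) * ∑ x' ∈ Finset.Icc τ S, w x' ≤ ∑ x' ∈ Finset.Icc τ S, u x' := aT_le_U hu hτS
        _ = 0 := hU0
  · have h1 : ∀ x, 1 ≤ x → x ≤ S → ¬ B x := fun x hx1 hxS hBx => hex ⟨x, hx1, hxS, hBx⟩
    rw [Finset.sum_eq_zero (fun x hx => by
      rw [Finset.mem_Icc] at hx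
      exact if_neg (h1 x hx.1 hx.2)),
      Finset.sum_eq_zero (fun x hx => by
      rw [Finset.mem_Icc] at hx
      exact if_neg (fun hc => h1 x hx.1 hx.2 hc.1))]

lemma mem_grid3 (S x y z : ℕ) : (x, y, z) ∈ grid3 S ↔
    (1 ≤ x ∧ x ≤ S) ∧ (1 ≤ y ∧ y ≤ S) ∧ (1 ≤ z ∧ z ≤ S) := by
  simp [grid3, Finset.mem_Icc]

lemma mem_seg0 (S a b c x y z : ℕ) :
    (x, y, z) ∈ segPts S ((0 : Fin 3), (a, b, c)) ↔ a ≤ x ∧ x ≤ S ∧ y = b ∧ z = c := by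
  unfold segPts
  rw [if_pos rfl, Finset.mem_image]
  constructor
  · rintro ⟨x', hx', hxeq⟩
    rw [Finset.mem_Icc] at hx'
    obtain ⟨rfl, rfl, rfl⟩ := Prod.mk.injEq .. ▸ hxeq
    exact ⟨hx'.1, hx'.2, rfl, rfl⟩
  · rintro ⟨h1, h2, rfl, rfl⟩
    exact ⟨x, Finset.mem_Icc.2 ⟨h1, h2⟩, rfl⟩

lemma mem_seg1 (S a b c x y z : ℕ) :
    (x, y, z) ∈ segPts S ((1 : Fin 3), (a, b, c)) ↔ b ≤ y ∧ y ≤ S ∧ x = a ∧ z = c := by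
  unfold segPts
  rw [if_neg (by decide : ¬ ((1:Fin 3) = 0)), if_pos rfl, Finset.mem_image]
  constructor
  · rintro ⟨y', hy', hyeq⟩
    rw [Finset.mem_Icc] at hy'
    obtain ⟨rfl, rfl, rfl⟩ := Prod.mk.injEq .. ▸ hyeq
    exact ⟨hy'.1, hy'.2, rfl, rfl⟩
  · rintro ⟨h1, h2, rfl, rfl⟩
    exact ⟨y, Finset.mem_Icc.2 ⟨h1, h2⟩, rfl⟩

lemma mem_seg2 (S a b c x y z : ℕ) :
    (x, y, z) ∈ segPts S ((2 : Fin 3), (a, b, c)) ↔ c ≤ z ∧ z ≤ S ∧ x = a ∧ y = b := by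
  unfold segPts
  rw [if_neg (by decide : ¬ ((2:Fin 3) = 0)), if_neg (by decide : ¬ ((2:Fin 3) = 1)),
    Finset.mem_image]
  constructor
  · rintro ⟨z', hz', hzeq⟩
    rw [Finset.mem_Icc] at hz'
    obtain ⟨rfl, rfl, rfl⟩ := Prod.mk.injEq .. ▸ hzeq
    exact ⟨hz'.1, hz'.2, rfl, rfl⟩
  · rintro ⟨h1, h2, rfl, rfl⟩
    exact ⟨z, Finset.mem_Icc.2 ⟨h1, h2⟩, rfl⟩

lemma fin3_cases (d : Fin 3) : d = 0 ∨ d = 1 ∨ d = 2 := by omega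

lemma sum_grid3 {S : ℕ} (F : ℕ × ℕ × ℕ → ℝ) :
    ∑ p ∈ grid3 S, F p
      = ∑ x ∈ Finset.Icc 1 S, ∑ y ∈ Finset.Icc 1 S, ∑ z ∈ Finset.Icc 1 S, F (x, y, z) := by
  rw [grid3, Finset.sum_product]
  exact Finset.sum_congr rfl fun x _ => Finset.sum_product ..

lemma profit_le_S (S : ℕ) (φ : ℕ → ℕ → ℕ → ℝ) (A : ℕ → ℕ → ℕ → ℕ)
    (hφ : ∀ x y z, 0 ≤ φ x y z)
    (hφsum : ∑ p ∈ grid3 S, φ p.1 p.2.1 p.2.2 = 1) :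
    profit3 S φ A ≤ S := by
  classical
  have key : ∀ (k : ℕ) (inf : ℕ × ℕ × ℕ → ℕ)
      (hinf : ∀ p ∈ (grid3 S).filter (fun p => A p.1 p.2.1 p.2.2 = k), (inf p) ≤ S),
      ∑ p ∈ (grid3 S).filter (fun p => A p.1 p.2.1 p.2.2 = k),
        φ p.1 p.2.1 p.2.2 * (inf p : ℕ)
      ≤ (S : ℝ) * ∑ p ∈ grid3 S, (if A p.1 p.2.1 p.2.2 = k then φ p.1 p.2.1 p.2.2 else 0) := by
    intro k inf hinf
    rw [Finset.mul_sum]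
    simp only [mul_ite, mul_zero]
    rw [← Finset.sum_filter]
    apply Finset.sum_le_sum
    intro p hp
    have h1 : ((inf p : ℕ) : ℝ) ≤ S := by exact_mod_cast hinf p hp
    have h2 := hφ p.1 p.2.1 p.2.2
    calc φ p.1 p.2.1 p.2.2 * (inf p : ℕ) ≤ φ p.1 p.2.1 p.2.2 * S := by
          exact mul_le_mul_of_nonneg_left h1 h2
      _ = S * φ p.1 p.2.1 p.2.2 := mul_comm _ _
  have hinf1 : ∀ p ∈ (grid3 S).filter (fun p => A p.1 p.2.1 p.2.2 = 1),
      sInf {x' | 1 ≤ x' ∧ A x' p.2.1 p.2.2 = 1} ≤ S := by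
    rintro ⟨x, y, z⟩ hp
    rw [Finset.mem_filter, mem_grid3] at hp
    exact le_trans (Nat.sInf_le ⟨hp.1.1.1, hp.2⟩) hp.1.1.2
  have hinf2 : ∀ p ∈ (grid3 S).filter (fun p => A p.1 p.2.1 p.2.2 = 2),
      sInf {y' | 1 ≤ y' ∧ A p.1 y' p.2.2 = 2} ≤ S := by
    rintro ⟨x, y, z⟩ hp
    rw [Finset.mem_filter, mem_grid3] at hp
    exact le_trans (Nat.sInf_le ⟨hp.1.2.1.1, hp.2⟩) hp.1.2.1.2
  have hinf3 : ∀ p ∈ (grid3 S).filter (fun p => A p.1 p.2.1 p.2.2 = 3),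
      sInf {z' | 1 ≤ z' ∧ A p.1 p.2.1 z' = 3} ≤ S := by
    rintro ⟨x, y, z⟩ hp
    rw [Finset.mem_filter, mem_grid3] at hp
    exact le_trans (Nat.sInf_le ⟨hp.1.2.2.1, hp.2⟩) hp.1.2.2.2
  have h1 := key 1 (fun p => sInf {x' | 1 ≤ x' ∧ A x' p.2.1 p.2.2 = 1}) hinf1
  have h2 := key 2 (fun p => sInf {y' | 1 ≤ y' ∧ A p.1 y' p.2.2 = 2}) hinf2
  have h3 := key 3 (fun p => sInf {z' | 1 ≤ z' ∧ A p.1 p.2.1 z' = 3}) hinf3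
  have hcomb : (∑ p ∈ grid3 S, (if A p.1 p.2.1 p.2.2 = 1 then φ p.1 p.2.1 p.2.2 else 0))
      + (∑ p ∈ grid3 S, (if A p.1 p.2.1 p.2.2 = 2 then φ p.1 p.2.1 p.2.2 else 0))
      + (∑ p ∈ grid3 S, (if A p.1 p.2.1 p.2.2 = 3 then φ p.1 p.2.1 p.2.2 else 0))
      ≤ ∑ p ∈ grid3 S, φ p.1 p.2.1 p.2.2 := by
    rw [← Finset.sum_add_distrib, ← Finset.sum_add_distrib]
    apply Finset.sum_le_sum
    intro p _
    have := hφ p.1 p.2.1 p.2.2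
    split_ifs <;> first | linarith | omega
  rw [profit3]
  have hS : (0:ℝ) ≤ S := Nat.cast_nonneg S
  calc _ ≤ (S:ℝ) * ((∑ p ∈ grid3 S, (if A p.1 p.2.1 p.2.2 = 1 then φ p.1 p.2.1 p.2.2 else 0))
      + (∑ p ∈ grid3 S, (if A p.1 p.2.1 p.2.2 = 2 then φ p.1 p.2.1 p.2.2 else 0))
      + (∑ p ∈ grid3 S, (if A p.1 p.2.1 p.2.2 = 3 then φ p.1 p.2.1 p.2.2 else 0))) := by
        rw [mul_add, mul_add]
        exact add_le_add (add_le_add h1 h2) h3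
    _ ≤ (S:ℝ) * 1 := by
        apply mul_le_mul_of_nonneg_left _ hS
        rw [← hφsum] at *
        exact hcomb
    _ = S := mul_one _

lemma step3 (S : ℕ) (φ f g h : ℕ → ℕ → ℕ → ℝ)
    (hf : ∀ x y z, f x y z =
      max ((x : ℝ) * ∑ x' ∈ Finset.Icc x S, φ x' y z
            - ∑ x' ∈ Finset.Icc (x + 1) S, f x' y z) 0)
    (hg : ∀ x y z, g x y z =
      max ((y : ℝ) * ∑ y' ∈ Finset.Icc y S, φ x y' z
            - ∑ y' ∈ Finset.Icc (y + 1) S, g x y' z) 0)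
    (hh : ∀ x y z, h x y z =
      max ((z : ℝ) * ∑ z' ∈ Finset.Icc z S, φ x y z'
            - ∑ z' ∈ Finset.Icc (z + 1) S, h x y z') 0)
    (C : Finset (Fin 3 × (ℕ × ℕ × ℕ)))
    (hvalid : ∀ s ∈ C, ValidSeg S f g h s)
    (hdisj : ∀ s ∈ C, ∀ t ∈ C, s ≠ t → Disjoint (segPts S s) (segPts S t)) :
    ∃ A : ℕ → ℕ → ℕ → ℕ, (∀ x y z, A x y z ≤ 3) ∧ Mono3 S A ∧
      profit3 S φ A = ∑ s ∈ C, segWt S f g h s := by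
  classical
  set A : ℕ → ℕ → ℕ → ℕ := fun x y z =>
    if ∃ a, ((0 : Fin 3), (a, y, z)) ∈ C ∧ a ≤ x ∧ x ≤ S then 1
    else if ∃ b, ((1 : Fin 3), (x, b, z)) ∈ C ∧ b ≤ y ∧ y ≤ S then 2
    else if ∃ c, ((2 : Fin 3), (x, y, c)) ∈ C ∧ c ≤ z ∧ z ≤ S then 3
    else 0 with hA
  have hval0 : ∀ a b c, ((0 : Fin 3), (a, b, c)) ∈ C →
      (1 ≤ a ∧ a ≤ S) ∧ 0 < f a b c ∧ (1 ≤ b ∧ b ≤ S) ∧ (1 ≤ c ∧ c ≤ S) := by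
    intro a b c hs
    obtain ⟨hg3, hpos⟩ := hvalid _ hs
    rw [mem_grid3] at hg3
    rw [if_pos rfl] at hpos
    exact ⟨hg3.1, hpos, hg3.2.1, hg3.2.2⟩
  have hval1 : ∀ a b c, ((1 : Fin 3), (a, b, c)) ∈ C →
      (1 ≤ b ∧ b ≤ S) ∧ 0 < g a b c ∧ (1 ≤ a ∧ a ≤ S) ∧ (1 ≤ c ∧ c ≤ S) := by
    intro a b c hs
    obtain ⟨hg3, hpos⟩ := hvalid _ hs
    rw [mem_grid3] at hg3
    rw [if_neg (by decide : ¬ ((1:Fin 3) = 0)), if_pos rfl] at hpos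
    exact ⟨hg3.2.1, hpos, hg3.1, hg3.2.2⟩
  have hval2 : ∀ a b c, ((2 : Fin 3), (a, b, c)) ∈ C →
      (1 ≤ c ∧ c ≤ S) ∧ 0 < h a b c ∧ (1 ≤ a ∧ a ≤ S) ∧ (1 ≤ b ∧ b ≤ S) := by
    intro a b c hs
    obtain ⟨hg3, hpos⟩ := hvalid _ hs
    rw [mem_grid3] at hg3
    rw [if_neg (by decide : ¬ ((2:Fin 3) = 0)),
      if_neg (by decide : ¬ ((2:Fin 3) = 1))] at hpos
    exact ⟨hg3.2.2, hpos, hg3.1, hg3.2.1⟩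
  have hx01 : ∀ x y z : ℕ, (∃ a, ((0 : Fin 3), (a, y, z)) ∈ C ∧ a ≤ x ∧ x ≤ S) →
      (∃ b, ((1 : Fin 3), (x, b, z)) ∈ C ∧ b ≤ y ∧ y ≤ S) → False := by
    rintro x y z ⟨a, ha, hax, hxS⟩ ⟨b, hb, hby, hyS⟩
    have hne : ((0 : Fin 3), (a, y, z)) ≠ ((1 : Fin 3), (x, b, z)) := by
      intro hq; rw [Prod.mk.injEq] at hq; exact absurd hq.1 (by decide)
    have hd := hdisj _ ha _ hb hne
    rw [Finset.disjoint_left] at hd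
    exact hd ((mem_seg0 S a y z x y z).2 ⟨hax, hxS, rfl, rfl⟩)
      ((mem_seg1 S x b z x y z).2 ⟨hby, hyS, rfl, rfl⟩)
  have hx02 : ∀ x y z : ℕ, (∃ a, ((0 : Fin 3), (a, y, z)) ∈ C ∧ a ≤ x ∧ x ≤ S) →
      (∃ c, ((2 : Fin 3), (x, y, c)) ∈ C ∧ c ≤ z ∧ z ≤ S) → False := by
    rintro x y z ⟨a, ha, hax, hxS⟩ ⟨c, hc, hcz, hzS⟩
    have hne : ((0 : Fin 3), (a, y, z)) ≠ ((2 : Fin 3), (x, y, c)) := by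
      intro hq; rw [Prod.mk.injEq] at hq; exact absurd hq.1 (by decide)
    have hd := hdisj _ ha _ hc hne
    rw [Finset.disjoint_left] at hd
    exact hd ((mem_seg0 S a y z x y z).2 ⟨hax, hxS, rfl, rfl⟩)
      ((mem_seg2 S x y c x y z).2 ⟨hcz, hzS, rfl, rfl⟩)
  have hx12 : ∀ x y z : ℕ, (∃ b, ((1 : Fin 3), (x, b, z)) ∈ C ∧ b ≤ y ∧ y ≤ S) →
      (∃ c, ((2 : Fin 3), (x, y, c)) ∈ C ∧ c ≤ z ∧ z ≤ S) → False := by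
    rintro x y z ⟨b, hb, hby, hyS⟩ ⟨c, hc, hcz, hzS⟩
    have hne : ((1 : Fin 3), (x, b, z)) ≠ ((2 : Fin 3), (x, y, c)) := by
      intro hq; rw [Prod.mk.injEq] at hq; exact absurd hq.1 (by decide)
    have hd := hdisj _ hb _ hc hne
    rw [Finset.disjoint_left] at hd
    exact hd ((mem_seg1 S x b z x y z).2 ⟨hby, hyS, rfl, rfl⟩)
      ((mem_seg2 S x y c x y z).2 ⟨hcz, hzS, rfl, rfl⟩)
  have hA1 : ∀ x y z, A x y z = 1 ↔ ∃ a, ((0 : Fin 3), (a, y, z)) ∈ C ∧ a ≤ x ∧ x ≤ S := by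
    intro x y z
    simp only [hA]
    constructor
    · intro hv
      split_ifs at hv with h1 h2 h3
      all_goals first
        | assumption
        | exact absurd hv (by norm_num)
    · intro hex
      rw [if_pos hex]
  have hA2 : ∀ x y z, A x y z = 2 ↔ ∃ b, ((1 : Fin 3), (x, b, z)) ∈ C ∧ b ≤ y ∧ y ≤ S := by
    intro x y z
    simp only [hA]
    constructor
    · intro hv
      split_ifs at hv with h1 h2 h3
      all_goals first
        | assumption
        | exact absurd hv (by norm_num)
    · intro hex
      rw [if_neg (fun hc => hx01 x y z hc hex), if_pos hex]
  have hA3 : ∀ x y z, A x y z = 3 ↔ ∃ c, ((2 : Fin 3), (x, y, c)) ∈ C ∧ c ≤ z ∧ z ≤ S := by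
    intro x y z
    simp only [hA]
    constructor
    · intro hv
      split_ifs at hv with h1 h2 h3
      all_goals first
        | assumption
        | exact absurd hv (by norm_num)
    · intro hex
      rw [if_neg (fun hc => hx02 x y z hc hex), if_neg (fun hc => hx12 x y z hc hex),
        if_pos hex]
  refine ⟨A, ?_, ⟨?_, ?_, ?_⟩, ?_⟩
  · intro x y z
    simp only [hA]
    split_ifs <;> omega
  · intro x y z _ hv x' hxx' hx'S
    obtain ⟨a, ha, hax, -⟩ := (hA1 x y z).1 hv
    exact (hA1 x' y z).2 ⟨a, ha, le_trans hax hxx', hx'S⟩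
  · intro x y z _ hv y' hyy' hy'S
    obtain ⟨b, hb, hby, -⟩ := (hA2 x y z).1 hv
    exact (hA2 x y' z).2 ⟨b, hb, le_trans hby hyy', hy'S⟩
  · intro x y z _ hv z' hzz' hz'S
    obtain ⟨c, hc, hcz, -⟩ := (hA3 x y z).1 hv
    exact (hA3 x y z').2 ⟨c, hc, le_trans hcz hzz', hz'S⟩
  · -- profit equality
    have hCsub : C ⊆ Finset.univ ×ˢ grid3 S := fun s hs =>
      Finset.mem_product.2 ⟨Finset.mem_univ _, (hvalid s hs).1⟩
    have eW : ∑ s ∈ C, segWt S f g h s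
        = ∑ s ∈ Finset.univ ×ˢ grid3 S, if s ∈ C then segWt S f g h s else 0 := by
      rw [Finset.sum_ite_mem, Finset.inter_eq_right.2 hCsub]
    have W0 : ∑ p ∈ grid3 S, (if ((0 : Fin 3), p) ∈ C then segWt S f g h ((0 : Fin 3), p) else 0)
        = ∑ y ∈ Finset.Icc 1 S, ∑ z ∈ Finset.Icc 1 S, ∑ x ∈ Finset.Icc 1 S,
            (if ((0 : Fin 3), (x, y, z)) ∈ C then ∑ x' ∈ Finset.Icc x S, f x' y z else 0) := by
      rw [sum_grid3, Finset.sum_comm]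
      exact Finset.sum_congr rfl fun y _ => Finset.sum_comm
    have W1 : ∑ p ∈ grid3 S, (if ((1 : Fin 3), p) ∈ C then segWt S f g h ((1 : Fin 3), p) else 0)
        = ∑ x ∈ Finset.Icc 1 S, ∑ z ∈ Finset.Icc 1 S, ∑ y ∈ Finset.Icc 1 S,
            (if ((1 : Fin 3), (x, y, z)) ∈ C then ∑ y' ∈ Finset.Icc y S, g x y' z else 0) := by
      rw [sum_grid3]
      exact Finset.sum_congr rfl fun x _ => Finset.sum_comm
    have W2 : ∑ p ∈ grid3 S, (if ((2 : Fin 3), p) ∈ C then segWt S f g h ((2 : Fin 3), p) else 0)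
        = ∑ x ∈ Finset.Icc 1 S, ∑ y ∈ Finset.Icc 1 S, ∑ z ∈ Finset.Icc 1 S,
            (if ((2 : Fin 3), (x, y, z)) ∈ C then ∑ z' ∈ Finset.Icc z S, h x y z' else 0) := by
      rw [sum_grid3]; rfl
    have L1 : ∑ p ∈ (grid3 S).filter (fun p => A p.1 p.2.1 p.2.2 = 1),
          φ p.1 p.2.1 p.2.2 * ((sInf {x' | 1 ≤ x' ∧ A x' p.2.1 p.2.2 = 1} : ℕ) : ℝ)
        = ∑ y ∈ Finset.Icc 1 S, ∑ z ∈ Finset.Icc 1 S, ∑ x ∈ Finset.Icc 1 S,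
            (if A x y z = 1 then φ x y z * ((sInf {x' | 1 ≤ x' ∧ A x' y z = 1} : ℕ) : ℝ)
             else 0) := by
      rw [Finset.sum_filter, sum_grid3, Finset.sum_comm]
      exact Finset.sum_congr rfl fun y _ => Finset.sum_comm
    have L2 : ∑ p ∈ (grid3 S).filter (fun p => A p.1 p.2.1 p.2.2 = 2),
          φ p.1 p.2.1 p.2.2 * ((sInf {y' | 1 ≤ y' ∧ A p.1 y' p.2.2 = 2} : ℕ) : ℝ)
        = ∑ x ∈ Finset.Icc 1 S, ∑ z ∈ Finset.Icc 1 S, ∑ y ∈ Finset.Icc 1 S,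
            (if A x y z = 2 then φ x y z * ((sInf {y' | 1 ≤ y' ∧ A x y' z = 2} : ℕ) : ℝ)
             else 0) := by
      rw [Finset.sum_filter, sum_grid3]
      exact Finset.sum_congr rfl fun x _ => Finset.sum_comm
    have L3 : ∑ p ∈ (grid3 S).filter (fun p => A p.1 p.2.1 p.2.2 = 3),
          φ p.1 p.2.1 p.2.2 * ((sInf {z' | 1 ≤ z' ∧ A p.1 p.2.1 z' = 3} : ℕ) : ℝ)
        = ∑ x ∈ Finset.Icc 1 S, ∑ y ∈ Finset.Icc 1 S, ∑ z ∈ Finset.Icc 1 S,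
            (if A x y z = 3 then φ x y z * ((sInf {z' | 1 ≤ z' ∧ A x y z' = 3} : ℕ) : ℝ)
             else 0) := by
      rw [Finset.sum_filter, sum_grid3]
    rw [profit3, L1, L2, L3, eW, Finset.sum_product, Fin.sum_univ_three, W0, W1, W2]
    have huniq0 : ∀ y z a b, ((0 : Fin 3), (a, y, z)) ∈ C → ((0 : Fin 3), (b, y, z)) ∈ C →
        a = b := by
      intro y z a b ha hb
      by_contra hne
      have hne' : ((0 : Fin 3), (a, y, z)) ≠ ((0 : Fin 3), (b, y, z)) := by
        intro hq
        apply hne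
        have := congrArg (fun s => (Prod.snd s).1) hq
        exact this
      have hd := hdisj _ ha _ hb hne'
      rw [Finset.disjoint_left] at hd
      exact hd ((mem_seg0 S a y z S y z).2 ⟨(hval0 a y z ha).1.2, le_refl S, rfl, rfl⟩)
        ((mem_seg0 S b y z S y z).2 ⟨(hval0 b y z hb).1.2, le_refl S, rfl, rfl⟩)
    have huniq1 : ∀ x z a b, ((1 : Fin 3), (x, a, z)) ∈ C → ((1 : Fin 3), (x, b, z)) ∈ C →
        a = b := by
      intro x z a b ha hb
      by_contra hne
      have hne' : ((1 : Fin 3), (x, a, z)) ≠ ((1 : Fin 3), (x, b, z)) := by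
        intro hq
        apply hne
        have := congrArg (fun s => (Prod.snd s).2.1) hq
        exact this
      have hd := hdisj _ ha _ hb hne'
      rw [Finset.disjoint_left] at hd
      exact hd ((mem_seg1 S x a z x S z).2 ⟨(hval1 x a z ha).1.2, le_refl S, rfl, rfl⟩)
        ((mem_seg1 S x b z x S z).2 ⟨(hval1 x b z hb).1.2, le_refl S, rfl, rfl⟩)
    have huniq2 : ∀ x y a b, ((2 : Fin 3), (x, y, a)) ∈ C → ((2 : Fin 3), (x, y, b)) ∈ C →
        a = b := by
      intro x y a b ha hb
      by_contra hne
      have hne' : ((2 : Fin 3), (x, y, a)) ≠ ((2 : Fin 3), (x, y, b)) := by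
        intro hq
        apply hne
        have := congrArg (fun s => (Prod.snd s).2.2) hq
        exact this
      have hd := hdisj _ ha _ hb hne'
      rw [Finset.disjoint_left] at hd
      exact hd ((mem_seg2 S x y a x y S).2 ⟨(hval2 x y a ha).1.2, le_refl S, rfl, rfl⟩)
        ((mem_seg2 S x y b x y S).2 ⟨(hval2 x y b hb).1.2, le_refl S, rfl, rfl⟩)
    congr 1
    congr 1
    · -- direction 0
      refine Finset.sum_congr rfl fun y _ => Finset.sum_congr rfl fun z _ => ?_
      refine (line_eq (fun x => hf x y z) (fun a => ((0 : Fin 3), (a, y, z)) ∈ C)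
        (fun x => A x y z = 1)
        (fun a ha => ⟨(hval0 a y z ha).1.1, (hval0 a y z ha).1.2, (hval0 a y z ha).2.1⟩)
        (fun a b ha hb => huniq0 y z a b ha hb)
        (fun x => hA1 x y z)).trans
        (Finset.sum_congr rfl fun x _ => by congr)
    · -- direction 1
      refine Finset.sum_congr rfl fun x _ => Finset.sum_congr rfl fun z _ => ?_
      refine (line_eq (fun y => hg x y z) (fun b => ((1 : Fin 3), (x, b, z)) ∈ C)
        (fun y => A x y z = 2)
        (fun b hb => ⟨(hval1 x b z hb).1.1, (hval1 x b z hb).1.2, (hval1 x b z hb).2.1⟩)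
        (fun a b ha hb => huniq1 x z a b ha hb)
        (fun y => hA2 x y z)).trans
        (Finset.sum_congr rfl fun y _ => by congr)
    · -- direction 2
      refine Finset.sum_congr rfl fun x _ => Finset.sum_congr rfl fun y _ => ?_
      refine (line_eq (fun z => hh x y z) (fun c => ((2 : Fin 3), (x, y, c)) ∈ C)
        (fun z => A x y z = 3)
        (fun c hc => ⟨(hval2 x y c hc).1.1, (hval2 x y c hc).1.2, (hval2 x y c hc).2.1⟩)
        (fun a b ha hb => huniq2 x y a b ha hb)
        (fun z => hA3 x y z)).trans
        (Finset.sum_congr rfl fun z _ => by congr)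

lemma step4 (S : ℕ) (φ f g h : ℕ → ℕ → ℕ → ℝ)
    (hφ : ∀ x y z, 0 ≤ φ x y z)
    (hf : ∀ x y z, f x y z =
      max ((x : ℝ) * ∑ x' ∈ Finset.Icc x S, φ x' y z
            - ∑ x' ∈ Finset.Icc (x + 1) S, f x' y z) 0)
    (hg : ∀ x y z, g x y z =
      max ((y : ℝ) * ∑ y' ∈ Finset.Icc y S, φ x y' z
            - ∑ y' ∈ Finset.Icc (y + 1) S, g x y' z) 0)
    (hh : ∀ x y z, h x y z =
      max ((z : ℝ) * ∑ z' ∈ Finset.Icc z S, φ x y z'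
            - ∑ z' ∈ Finset.Icc (z + 1) S, h x y z') 0)
    (A : ℕ → ℕ → ℕ → ℕ) (hA : ∀ x y z, A x y z ≤ 3) (hmono : Mono3 S A) :
    ∃ C : Finset (Fin 3 × (ℕ × ℕ × ℕ)),
      (∀ s ∈ C, ValidSeg S f g h s) ∧
      (∀ s ∈ C, ∀ t ∈ C, s ≠ t → Disjoint (segPts S s) (segPts S t)) ∧
      profit3 S φ A ≤ ∑ s ∈ C, segWt S f g h s := by
  classical
  obtain ⟨hm1, hm2, hm3⟩ := hmono
  set c0 : ℕ × ℕ × ℕ → Prop := fun p =>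
    A p.1 p.2.1 p.2.2 = 1 ∧ 0 < f p.1 p.2.1 p.2.2 ∧
      ∀ t, 1 ≤ t → t < p.1 → ¬(A t p.2.1 p.2.2 = 1 ∧ 0 < f t p.2.1 p.2.2) with hc0
  set c1 : ℕ × ℕ × ℕ → Prop := fun p =>
    A p.1 p.2.1 p.2.2 = 2 ∧ 0 < g p.1 p.2.1 p.2.2 ∧
      ∀ t, 1 ≤ t → t < p.2.1 → ¬(A p.1 t p.2.2 = 2 ∧ 0 < g p.1 t p.2.2) with hc1
  set c2 : ℕ × ℕ × ℕ → Prop := fun p =>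
    A p.1 p.2.1 p.2.2 = 3 ∧ 0 < h p.1 p.2.1 p.2.2 ∧
      ∀ t, 1 ≤ t → t < p.2.2 → ¬(A p.1 p.2.1 t = 3 ∧ 0 < h p.1 p.2.1 t) with hc2
  set C : Finset (Fin 3 × (ℕ × ℕ × ℕ)) :=
    (Finset.univ ×ˢ grid3 S).filter
      (fun s => if s.1 = 0 then c0 s.2 else if s.1 = 1 then c1 s.2 else c2 s.2) with hC
  have hmem : ∀ s : Fin 3 × (ℕ × ℕ × ℕ), s ∈ C ↔ s.2 ∈ grid3 S ∧
      (if s.1 = 0 then c0 s.2 else if s.1 = 1 then c1 s.2 else c2 s.2) := by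
    intro s
    rw [hC, Finset.mem_filter, Finset.mem_product]
    simp only [Finset.mem_univ, true_and]
  have hmem0 : ∀ a b c : ℕ, ((0 : Fin 3), (a, b, c)) ∈ C ↔
      (a, b, c) ∈ grid3 S ∧ c0 (a, b, c) := by
    intro a b c; rw [hmem]; simp only [if_pos rfl, if_true, eq_self_iff_true]
  have hmem1 : ∀ a b c : ℕ, ((1 : Fin 3), (a, b, c)) ∈ C ↔
      (a, b, c) ∈ grid3 S ∧ c1 (a, b, c) := by
    intro a b c; rw [hmem]
    simp only [if_neg (by decide : ¬ ((1:Fin 3) = 0)), if_pos rfl, if_true, eq_self_iff_true]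
  have hmem2 : ∀ a b c : ℕ, ((2 : Fin 3), (a, b, c)) ∈ C ↔
      (a, b, c) ∈ grid3 S ∧ c2 (a, b, c) := by
    intro a b c; rw [hmem]
    simp only [if_neg (by decide : ¬ ((2:Fin 3) = 0)),
      if_neg (by decide : ¬ ((2:Fin 3) = 1))]
  -- value of A on segments
  have hA0 : ∀ a b c, ((0 : Fin 3), (a, b, c)) ∈ C →
      ∀ x y z, (x, y, z) ∈ segPts S ((0 : Fin 3), (a, b, c)) → A x y z = 1 := by
    intro a b c hs x y z hp
    rw [mem_seg0] at hp
    obtain ⟨hax, hxS, rfl, rfl⟩ := hp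
    rw [hmem0] at hs
    exact hm1 a y z hs.1 hs.2.1 x hax hxS
  have hA1v : ∀ a b c, ((1 : Fin 3), (a, b, c)) ∈ C →
      ∀ x y z, (x, y, z) ∈ segPts S ((1 : Fin 3), (a, b, c)) → A x y z = 2 := by
    intro a b c hs x y z hp
    rw [mem_seg1] at hp
    obtain ⟨hby, hyS, rfl, rfl⟩ := hp
    rw [hmem1] at hs
    exact hm2 x b z hs.1 hs.2.1 y hby hyS
  have hA2v : ∀ a b c, ((2 : Fin 3), (a, b, c)) ∈ C →
      ∀ x y z, (x, y, z) ∈ segPts S ((2 : Fin 3), (a, b, c)) → A x y z = 3 := by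
    intro a b c hs x y z hp
    rw [mem_seg2] at hp
    obtain ⟨hcz, hzS, rfl, rfl⟩ := hp
    rw [hmem2] at hs
    exact hm3 x y c hs.1 hs.2.1 z hcz hzS
  refine ⟨C, ?_, ?_, ?_⟩
  · -- validity
    rintro ⟨d, a, b, c⟩ hs
    rcases fin3_cases d with rfl | rfl | rfl
    · rw [hmem0] at hs
      exact ⟨hs.1, by rw [if_pos rfl]; exact hs.2.2.1⟩
    · rw [hmem1] at hs
      refine ⟨hs.1, ?_⟩
      rw [if_neg (by decide : ¬ ((1:Fin 3) = 0)), if_pos rfl]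
      exact hs.2.2.1
    · rw [hmem2] at hs
      refine ⟨hs.1, ?_⟩
      rw [if_neg (by decide : ¬ ((2:Fin 3) = 0)), if_neg (by decide : ¬ ((2:Fin 3) = 1))]
      exact hs.2.2.1
  · -- disjointness
    rintro ⟨d, a, b, c⟩ hs ⟨d', a', b', c'⟩ ht hne
    rw [Finset.disjoint_left]
    rintro ⟨px, py, pz⟩ hps hpt
    rcases fin3_cases d with rfl | rfl | rfl <;> rcases fin3_cases d' with rfl | rfl | rfl
    · -- both dir 0
      rw [mem_seg0] at hps hpt
      obtain ⟨h1, h2, rfl, rfl⟩ := hps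
      obtain ⟨h1', h2', hb, hc⟩ := hpt
      subst hb; subst hc
      have hane : a ≠ a' := fun hq => hne (by rw [hq])
      rw [hmem0] at hs ht
      rw [mem_grid3] at *
      rcases lt_or_gt_of_ne hane with hlt | hgt
      · exact ht.2.2.2 a hs.1.1.1 hlt ⟨hs.2.1, hs.2.2.1⟩
      · exact hs.2.2.2 a' ht.1.1.1 hgt ⟨ht.2.1, ht.2.2.1⟩
    · have e1 := hA0 a b c hs px py pz hps
      have e2 := hA1v a' b' c' ht px py pz hpt
      omega
    · have e1 := hA0 a b c hs px py pz hps
      have e2 := hA2v a' b' c' ht px py pz hpt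
      omega
    · have e1 := hA1v a b c hs px py pz hps
      have e2 := hA0 a' b' c' ht px py pz hpt
      omega
    · -- both dir 1
      rw [mem_seg1] at hps hpt
      obtain ⟨h1, h2, rfl, rfl⟩ := hps
      obtain ⟨h1', h2', ha, hc⟩ := hpt
      subst ha; subst hc
      have hane : b ≠ b' := fun hq => hne (by rw [hq])
      rw [hmem1] at hs ht
      rw [mem_grid3] at *
      rcases lt_or_gt_of_ne hane with hlt | hgt
      · exact ht.2.2.2 b hs.1.2.1.1 hlt ⟨hs.2.1, hs.2.2.1⟩
      · exact hs.2.2.2 b' ht.1.2.1.1 hgt ⟨ht.2.1, ht.2.2.1⟩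
    · have e1 := hA1v a b c hs px py pz hps
      have e2 := hA2v a' b' c' ht px py pz hpt
      omega
    · have e1 := hA2v a b c hs px py pz hps
      have e2 := hA0 a' b' c' ht px py pz hpt
      omega
    · have e1 := hA2v a b c hs px py pz hps
      have e2 := hA1v a' b' c' ht px py pz hpt
      omega
    · -- both dir 2
      rw [mem_seg2] at hps hpt
      obtain ⟨h1, h2, rfl, rfl⟩ := hps
      obtain ⟨h1', h2', ha, hb⟩ := hpt
      subst ha; subst hb
      have hane : c ≠ c' := fun hq => hne (by rw [hq])
      rw [hmem2] at hs ht
      rw [mem_grid3] at *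
      rcases lt_or_gt_of_ne hane with hlt | hgt
      · exact ht.2.2.2 c hs.1.2.2.1 hlt ⟨hs.2.1, hs.2.2.1⟩
      · exact hs.2.2.2 c' ht.1.2.2.1 hgt ⟨ht.2.1, ht.2.2.1⟩
  · -- profit inequality
    have e1 : ∑ s ∈ C, segWt S f g h s
        = (∑ p ∈ grid3 S, if c0 p then ∑ x' ∈ Finset.Icc p.1 S, f x' p.2.1 p.2.2 else 0)
        + (∑ p ∈ grid3 S, if c1 p then ∑ y' ∈ Finset.Icc p.2.1 S, g p.1 y' p.2.2 else 0)
        + (∑ p ∈ grid3 S, if c2 p then ∑ z' ∈ Finset.Icc p.2.2 S, h p.1 p.2.1 z' else 0) := by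
      rw [hC, Finset.sum_filter, Finset.sum_product, Fin.sum_univ_three]
      congr 1
    rw [e1, profit3]
    have L1 : ∑ p ∈ (grid3 S).filter (fun p => A p.1 p.2.1 p.2.2 = 1),
          φ p.1 p.2.1 p.2.2 * ((sInf {x' | 1 ≤ x' ∧ A x' p.2.1 p.2.2 = 1} : ℕ) : ℝ)
        = ∑ y ∈ Finset.Icc 1 S, ∑ z ∈ Finset.Icc 1 S, ∑ x ∈ Finset.Icc 1 S,
            (if A x y z = 1 then φ x y z * ((sInf {x' | 1 ≤ x' ∧ A x' y z = 1} : ℕ) : ℝ)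
             else 0) := by
      rw [Finset.sum_filter, sum_grid3, Finset.sum_comm]
      exact Finset.sum_congr rfl fun y _ => Finset.sum_comm
    have R1 : ∑ p ∈ grid3 S, (if c0 p then ∑ x' ∈ Finset.Icc p.1 S, f x' p.2.1 p.2.2 else 0)
        = ∑ y ∈ Finset.Icc 1 S, ∑ z ∈ Finset.Icc 1 S, ∑ x ∈ Finset.Icc 1 S,
            (if c0 (x, y, z) then ∑ x' ∈ Finset.Icc x S, f x' y z else 0) := by
      rw [sum_grid3, Finset.sum_comm]
      exact Finset.sum_congr rfl fun y _ => Finset.sum_comm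
    have L2 : ∑ p ∈ (grid3 S).filter (fun p => A p.1 p.2.1 p.2.2 = 2),
          φ p.1 p.2.1 p.2.2 * ((sInf {y' | 1 ≤ y' ∧ A p.1 y' p.2.2 = 2} : ℕ) : ℝ)
        = ∑ x ∈ Finset.Icc 1 S, ∑ z ∈ Finset.Icc 1 S, ∑ y ∈ Finset.Icc 1 S,
            (if A x y z = 2 then φ x y z * ((sInf {y' | 1 ≤ y' ∧ A x y' z = 2} : ℕ) : ℝ)
             else 0) := by
      rw [Finset.sum_filter, sum_grid3]
      exact Finset.sum_congr rfl fun x _ => Finset.sum_comm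
    have R2 : ∑ p ∈ grid3 S, (if c1 p then ∑ y' ∈ Finset.Icc p.2.1 S, g p.1 y' p.2.2 else 0)
        = ∑ x ∈ Finset.Icc 1 S, ∑ z ∈ Finset.Icc 1 S, ∑ y ∈ Finset.Icc 1 S,
            (if c1 (x, y, z) then ∑ y' ∈ Finset.Icc y S, g x y' z else 0) := by
      rw [sum_grid3]
      exact Finset.sum_congr rfl fun x _ => Finset.sum_comm
    have L3 : ∑ p ∈ (grid3 S).filter (fun p => A p.1 p.2.1 p.2.2 = 3),
          φ p.1 p.2.1 p.2.2 * ((sInf {z' | 1 ≤ z' ∧ A p.1 p.2.1 z' = 3} : ℕ) : ℝ)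
        = ∑ x ∈ Finset.Icc 1 S, ∑ y ∈ Finset.Icc 1 S, ∑ z ∈ Finset.Icc 1 S,
            (if A x y z = 3 then φ x y z * ((sInf {z' | 1 ≤ z' ∧ A x y z' = 3} : ℕ) : ℝ)
             else 0) := by
      rw [Finset.sum_filter, sum_grid3]
    have R3 : ∑ p ∈ grid3 S, (if c2 p then ∑ z' ∈ Finset.Icc p.2.2 S, h p.1 p.2.1 z' else 0)
        = ∑ x ∈ Finset.Icc 1 S, ∑ y ∈ Finset.Icc 1 S, ∑ z ∈ Finset.Icc 1 S,
            (if c2 (x, y, z) then ∑ z' ∈ Finset.Icc z S, h x y z' else 0) := by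
      rw [sum_grid3]
    rw [L1, R1, L2, R2, L3, R3]
    apply add_le_add
    apply add_le_add
    · -- direction 0
      apply Finset.sum_le_sum
      intro y hy
      apply Finset.sum_le_sum
      intro z hz
      rw [Finset.mem_Icc] at hy hz
      refine (line_le (fun x => hφ x y z) (fun x => hf x y z) (fun x => A x y z = 1)
        (fun x hx1 hxS hBx x' h1 h2 =>
          hm1 x y z ((mem_grid3 S x y z).2 ⟨⟨hx1, hxS⟩, hy, hz⟩) hBx x' h1 h2)).trans
        (le_of_eq (Finset.sum_congr rfl fun x _ => by congr))
    · -- direction 1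
      apply Finset.sum_le_sum
      intro x hx
      apply Finset.sum_le_sum
      intro z hz
      rw [Finset.mem_Icc] at hx hz
      refine (line_le (fun y => hφ x y z) (fun y => hg x y z) (fun y => A x y z = 2)
        (fun y hy1 hyS hBy y' h1 h2 =>
          hm2 x y z ((mem_grid3 S x y z).2 ⟨hx, ⟨hy1, hyS⟩, hz⟩) hBy y' h1 h2)).trans
        (le_of_eq (Finset.sum_congr rfl fun y _ => by congr))
    · -- direction 2
      apply Finset.sum_le_sum
      intro x hx
      apply Finset.sum_le_sum
      intro y hy
      rw [Finset.mem_Icc] at hx hy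
      refine (line_le (fun z => hφ x y z) (fun z => hh x y z) (fun z => A x y z = 3)
        (fun z hz1 hzS hBz z' h1 h2 =>
          hm3 x y z ((mem_grid3 S x y z).2 ⟨hx, hy, ⟨hz1, hzS⟩⟩) hBz z' h1 h2)).trans
        (le_of_eq (Finset.sum_congr rfl fun z _ => by congr))

lemma main_equiv (S : ℕ) (φ f g h : ℕ → ℕ → ℕ → ℝ)
    (hφ : ∀ x y z, 0 ≤ φ x y z)
    (hφsum : ∑ p ∈ grid3 S, φ p.1 p.2.1 p.2.2 = 1)
    (hf : ∀ x y z, f x y z =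
      max ((x : ℝ) * ∑ x' ∈ Finset.Icc x S, φ x' y z
            - ∑ x' ∈ Finset.Icc (x + 1) S, f x' y z) 0)
    (hg : ∀ x y z, g x y z =
      max ((y : ℝ) * ∑ y' ∈ Finset.Icc y S, φ x y' z
            - ∑ y' ∈ Finset.Icc (y + 1) S, g x y' z) 0)
    (hh : ∀ x y z, h x y z =
      max ((z : ℝ) * ∑ z' ∈ Finset.Icc z S, φ x y z'
            - ∑ z' ∈ Finset.Icc (z + 1) S, h x y z') 0) :
    sSup {r : ℝ | ∃ A : ℕ → ℕ → ℕ → ℕ, (∀ x y z, A x y z ≤ 3) ∧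
        Mono3 S A ∧ r = profit3 S φ A}
    = sSup {r : ℝ | ∃ C : Finset (Fin 3 × (ℕ × ℕ × ℕ)),
        (∀ s ∈ C, ValidSeg S f g h s) ∧
        (∀ s ∈ C, ∀ t ∈ C, s ≠ t → Disjoint (segPts S s) (segPts S t)) ∧
        r = ∑ s ∈ C, segWt S f g h s} := by
  set L := {r : ℝ | ∃ A : ℕ → ℕ → ℕ → ℕ, (∀ x y z, A x y z ≤ 3) ∧
      Mono3 S A ∧ r = profit3 S φ A} with hLdef
  set R := {r : ℝ | ∃ C : Finset (Fin 3 × (ℕ × ℕ × ℕ)),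
      (∀ s ∈ C, ValidSeg S f g h s) ∧
      (∀ s ∈ C, ∀ t ∈ C, s ≠ t → Disjoint (segPts S s) (segPts S t)) ∧
      r = ∑ s ∈ C, segWt S f g h s} with hRdef
  have hRL : R ⊆ L := by
    rintro r ⟨C, hv, hd, rfl⟩
    obtain ⟨A, h1, h2, h3⟩ := step3 S φ f g h hf hg hh C hv hd
    exact ⟨A, h1, h2, h3.symm⟩
  have hLbdd : BddAbove L := by
    refine ⟨S, ?_⟩
    rintro r ⟨A, -, -, rfl⟩
    exact profit_le_S S φ A hφ hφsum
  have hRbdd : BddAbove R := hLbdd.mono hRL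
  have hRne : R.Nonempty := by
    refine ⟨0, ∅, ?_, ?_, by simp⟩
    · intro s hs; simp at hs
    · intro s hs; simp at hs
  have hLne : L.Nonempty := Set.Nonempty.mono hRL hRne
  apply le_antisymm
  · apply csSup_le hLne
    rintro r ⟨A, hA3, hm, rfl⟩
    obtain ⟨C, hv, hd, hle⟩ := step4 S φ f g h hφ hf hg hh A hA3 hm
    exact hle.trans (le_csSup hRbdd ⟨C, hv, hd, rfl⟩)
  · exact csSup_le_csSup hLbdd hRne hRL

/-- the three-bidder optimal auction design problem is equivalent
to the segment-packing problem: the maximum threshold profit over monotone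
allocations equals the maximum total weight of a collection of pairwise
disjoint segments induced by `φ`. -/
theorem threeBidder_auction_eq_segments
    (S : ℕ) (φ f g h : ℕ → ℕ → ℕ → ℝ)
    (hφ : ∀ x y z, 0 ≤ φ x y z)
    (hφsum : ∑ p ∈ grid3 S, φ p.1 p.2.1 p.2.2 = 1)
    (hf : ∀ x y z, f x y z =
      max ((x : ℝ) * ∑ x' ∈ Finset.Icc x S, φ x' y z
            - ∑ x' ∈ Finset.Icc (x + 1) S, f x' y z) 0)
    (hg : ∀ x y z, g x y z =
      max ((y : ℝ) * ∑ y' ∈ Finset.Icc y S, φ x y' z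
            - ∑ y' ∈ Finset.Icc (y + 1) S, g x y' z) 0)
    (hh : ∀ x y z, h x y z =
      max ((z : ℝ) * ∑ z' ∈ Finset.Icc z S, φ x y z'
            - ∑ z' ∈ Finset.Icc (z + 1) S, h x y z') 0) :
    sSup {r : ℝ | ∃ A : ℕ → ℕ → ℕ → ℕ, (∀ x y z, A x y z ≤ 3) ∧
        Mono3 S A ∧ r = profit3 S φ A}
    = sSup {r : ℝ | ∃ C : Finset (Fin 3 × (ℕ × ℕ × ℕ)),
        (∀ s ∈ C, ValidSeg S f g h s) ∧
        (∀ s ∈ C, ∀ t ∈ C, s ≠ t → Disjoint (segPts S s) (segPts S t)) ∧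
        r = ∑ s ∈ C, segWt S f g h s} := by
  classical
  exact main_equiv S φ f g h hφ hφsum hf hg hh
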